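/- arXiv:2302.13411 — 3 statements merged into one kernel-verified Lean document; each statement's English description precedes it below -/
import Mathlib

section
/- Consider the inverse optimization problem with multiple cost functions c^1, …, c^k under the weighted bottleneck Hamming distance objective. Suppose that for each j ∈ [k] the single-cost instance with cost c^j admits a feasible deviation vector, and let δ^j denote the minimum of H_{∞,w} over deviation vectors feasible for cost c^j. Then there exists a deviation vector p* that is simultaneously feasible for all costs c^1, …, c^k and satisfies H_{∞,w}(p*) = max{δ^j : j ∈ [k]}; consequently, the minimum of H_{∞,w} over deviation vectors simultaneously feasible for all k costs is attained and equals max{δ^j : j ∈ [k]}. -/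
open Finset

noncomputable section

variable {S : Type*}

/-- A deviation vector `p` is feasible: it respects the bounds `l ≤ p ≤ u`
(interpreted in the extended reals) and makes `Fstar` a minimum-cost member
of `𝓕` with respect to `c - p`. -/
def IsFeasibleDev (𝓕 : Finset (Finset S)) (Fstar : Finset S)
    (c : S → ℝ) (l u : S → EReal) (p : S → ℝ) : Prop :=
  (∀ s, l s ≤ (p s : EReal) ∧ (p s : EReal) ≤ u s) ∧
  ∀ F ∈ 𝓕, ∑ s ∈ Fstar, (c s - p s) ≤ ∑ s ∈ F, (c s - p s)

/-- The weighted bottleneck Hamming distance `H_{∞,w}(p) = max {w(s) : p(s) ≠ 0}`,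
with the maximum over the empty set taken to be `0`. -/
def Hbot [Fintype S] (w p : S → ℝ) : ℝ :=
  WithBot.unbotD 0 ((((univ : Finset S).filter fun s => p s ≠ 0)).image w).max

/-- The constant `m` from the bottleneck Hamming distance setting. -/
def mB [DecidableEq S] (𝓕 : Finset (Finset S)) (Fstar : Finset S)
    (c : S → ℝ) (l u : S → EReal) : ℝ :=
  max 0 (WithBot.unbotD 0 (𝓕.image fun F =>
    (∑ s ∈ Fstar, c s) - (∑ s ∈ F, c s)
      - ∑ s ∈ (Fstar \ F).filter (fun s => u s < 0), (u s).toReal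
      + ∑ s ∈ (F \ Fstar).filter (fun s => 0 < l s), (l s).toReal).max)

/-- The special deviation vector `p^δ` of the bottleneck Hamming distance setting. -/
def pB [DecidableEq S] (𝓕 : Finset (Finset S)) (Fstar : Finset S)
    (c : S → ℝ) (l u : S → EReal) (w : S → ℝ) (δ : ℝ) (s : S) : ℝ :=
  if w s ≤ δ then
    if s ∈ Fstar then (if u s = ⊤ then mB 𝓕 Fstar c l u else (u s).toReal)
    else (if l s = ⊥ then -(mB 𝓕 Fstar c l u) else (l s).toReal)
  else 0

lemma Hbot_le [Fintype S] {w p : S → ℝ} {b : ℝ} (hb : 0 ≤ b)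
    (h : ∀ s, p s ≠ 0 → w s ≤ b) : Hbot w p ≤ b := by
  unfold Hbot
  cases hm : (((univ : Finset S).filter fun s => p s ≠ 0).image w).max with
  | bot => simpa using hb
  | coe a =>
    obtain ⟨s, hs, rfl⟩ := Finset.mem_image.mp (Finset.mem_of_max hm)
    exact h s (Finset.mem_filter.mp hs).2

lemma le_Hbot [Fintype S] {w p : S → ℝ} {s : S} (h : p s ≠ 0) : w s ≤ Hbot w p := by
  have h1 : (w s : WithBot ℝ) ≤ (((univ : Finset S).filter fun s => p s ≠ 0).image w).max :=
    Finset.le_max (Finset.mem_image_of_mem _ (Finset.mem_filter.mpr ⟨Finset.mem_univ s, h⟩))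
  unfold Hbot
  cases hm : (((univ : Finset S).filter fun s => p s ≠ 0).image w).max with
  | bot => rw [hm] at h1; exact absurd h1 (by simp)
  | coe a => rw [hm] at h1; exact_mod_cast h1

lemma Hbot_nonneg [Fintype S] {w p : S → ℝ} (hw : ∀ s, 0 < w s) : 0 ≤ Hbot w p := by
  unfold Hbot
  cases hm : (((univ : Finset S).filter fun s => p s ≠ 0).image w).max with
  | bot => simp
  | coe a =>
    obtain ⟨s, _, rfl⟩ := Finset.mem_image.mp (Finset.mem_of_max hm)
    exact (hw s).le

theorem bottleneck_multiple_costs [Fintype S] [DecidableEq S]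
    {J : Type*} [Fintype J] [Nonempty J]
    (𝓕 : Finset (Finset S)) (Fstar : Finset S) (c : J → S → ℝ) (w : S → ℝ)
    (l u : S → EReal)
    (hw : ∀ s, 0 < w s) (hl : ∀ s, l s ≠ ⊤) (hu : ∀ s, u s ≠ ⊥)
    (hlu : ∀ s, l s ≤ u s) (h𝓕 : 𝓕.Nonempty) (hF : Fstar ∈ 𝓕)
    (δ : J → ℝ)
    (hδ : ∀ j, (∃ p : S → ℝ, IsFeasibleDev 𝓕 Fstar (c j) l u p ∧ Hbot w p = δ j) ∧
      (∀ p : S → ℝ, IsFeasibleDev 𝓕 Fstar (c j) l u p → δ j ≤ Hbot w p)) :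
    ∃ pstar : S → ℝ, (∀ j, IsFeasibleDev 𝓕 Fstar (c j) l u pstar) ∧
      Hbot w pstar = (univ : Finset J).sup' univ_nonempty δ ∧
      ∀ q : S → ℝ, (∀ j, IsFeasibleDev 𝓕 Fstar (c j) l u q) →
        Hbot w pstar ≤ Hbot w q := by
  classical
  choose p hfeas hH using fun j => (hδ j).1
  set δs : ℝ := (univ : Finset J).sup' univ_nonempty δ with hδsdef
  have hδ0 : ∀ j, 0 ≤ δ j := fun j => (hH j) ▸ Hbot_nonneg hw
  have hδsle : ∀ j, δ j ≤ δs := fun j => Finset.le_sup' δ (mem_univ j)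
  have hδs0 : 0 ≤ δs := le_trans (hδ0 (Classical.arbitrary J)) (hδsle _)
  have hzero : ∀ j s, ¬ w s ≤ δs → p j s = 0 := by
    intro j s hws
    by_contra h
    exact hws (((le_Hbot h).trans_eq (hH j)).trans (hδsle j))
  set M : ℝ := (∑ j : J, ∑ s : S, |p j s|) + ∑ s : S, (|(l s).toReal| + |(u s).toReal|)
    with hMdef
  have hsum1 : (0:ℝ) ≤ ∑ j : J, ∑ s : S, |p j s| :=
    Finset.sum_nonneg fun j _ => Finset.sum_nonneg fun s _ => abs_nonneg _
  have hsum2 : (0:ℝ) ≤ ∑ s : S, (|(l s).toReal| + |(u s).toReal|) :=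
    Finset.sum_nonneg fun s _ => add_nonneg (abs_nonneg _) (abs_nonneg _)
  have hMp : ∀ j s, |p j s| ≤ M := by
    intro j s
    have h1 : |p j s| ≤ ∑ s : S, |p j s| :=
      Finset.single_le_sum (f := fun s => |p j s|) (fun i _ => abs_nonneg _) (mem_univ s)
    have h2 : (∑ s : S, |p j s|) ≤ ∑ j : J, ∑ s : S, |p j s| :=
      Finset.single_le_sum (f := fun j => ∑ s : S, |p j s|)
        (fun i _ => Finset.sum_nonneg fun s _ => abs_nonneg _) (mem_univ j)
    rw [hMdef]; linarith
  have hMlu : ∀ s : S, |(l s).toReal| ≤ M ∧ |(u s).toReal| ≤ M := by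
    intro s
    have h1 : |(l s).toReal| + |(u s).toReal| ≤ ∑ s : S, (|(l s).toReal| + |(u s).toReal|) :=
      Finset.single_le_sum (f := fun s => |(l s).toReal| + |(u s).toReal|)
        (fun i _ => add_nonneg (abs_nonneg _) (abs_nonneg _)) (mem_univ s)
    constructor <;> · rw [hMdef]; have := abs_nonneg (l s).toReal
                      have := abs_nonneg (u s).toReal; linarith
  set P : S → ℝ := fun s => if w s ≤ δs then
      (if s ∈ Fstar then (if u s = ⊤ then M else (u s).toReal)
        else (if l s = ⊥ then -M else (l s).toReal)) else 0 with hPdef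
  -- comparison with each p j
  have hcomp : ∀ j s, (s ∈ Fstar → p j s ≤ P s) ∧ (s ∉ Fstar → P s ≤ p j s) := by
    intro j s
    by_cases hws : w s ≤ δs
    · constructor
      · intro hsF
        by_cases hut : u s = ⊤
        · simp only [hPdef, if_pos hws, if_pos hsF, if_pos hut]
          exact (le_abs_self _).trans (hMp j s)
        · simp only [hPdef, if_pos hws, if_pos hsF, if_neg hut]
          have hub := (hfeas j).1 s |>.2
          rw [← EReal.coe_toReal hut (hu s)] at hub
          exact_mod_cast hub
      · intro hsF
        by_cases hlb : l s = ⊥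
        · simp only [hPdef, if_pos hws, if_neg hsF, if_pos hlb]
          linarith [hMp j s, neg_abs_le (p j s)]
        · simp only [hPdef, if_pos hws, if_neg hsF, if_neg hlb]
          have hlbd := (hfeas j).1 s |>.1
          rw [← EReal.coe_toReal (hl s) hlb] at hlbd
          exact_mod_cast hlbd
    · have h0 := hzero j s hws
      simp only [hPdef, if_neg hws]
      exact ⟨fun _ => h0.le, fun _ => h0.ge⟩
  -- auxiliary: -M ≤ p j s ≤ M
  have hMl : ∀ s, ((l s).toReal : EReal) ≤ (M : EReal) := by
    intro s
    exact_mod_cast (le_abs_self _).trans (hMlu s).1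
  have hMu : ∀ s, ((-M : ℝ) : EReal) ≤ ((u s).toReal : EReal) := by
    intro s
    have : -M ≤ (u s).toReal := by
      have := (hMlu s).2
      have := neg_abs_le (u s).toReal
      linarith
    exact_mod_cast this
  -- bound feasibility
  have hbounds : ∀ s, l s ≤ (P s : EReal) ∧ (P s : EReal) ≤ u s := by
    intro s
    by_cases hws : w s ≤ δs
    · by_cases hsF : s ∈ Fstar
      · by_cases hut : u s = ⊤
        · simp only [hPdef, if_pos hws, if_pos hsF, if_pos hut]
          refine ⟨?_, hut ▸ le_top⟩
          by_cases hlb : l s = ⊥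
          · exact hlb ▸ bot_le
          · rw [← EReal.coe_toReal (hl s) hlb]; exact hMl s
        · simp only [hPdef, if_pos hws, if_pos hsF, if_neg hut]
          rw [EReal.coe_toReal hut (hu s)]
          exact ⟨hlu s, le_refl _⟩
      · by_cases hlb : l s = ⊥
        · simp only [hPdef, if_pos hws, if_neg hsF, if_pos hlb]
          refine ⟨hlb ▸ bot_le, ?_⟩
          by_cases hut : u s = ⊤
          · exact hut ▸ le_top
          · rw [← EReal.coe_toReal hut (hu s)]
            exact_mod_cast hMu s
        · simp only [hPdef, if_pos hws, if_neg hsF, if_neg hlb]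
          rw [EReal.coe_toReal (hl s) hlb]
          exact ⟨le_refl _, hlu s⟩
    · simp only [hPdef, if_neg hws]
      have j0 := Classical.arbitrary J
      have h0 := hzero j0 s hws
      have := (hfeas j0).1 s
      rw [h0] at this
      exact_mod_cast this
  have hfeasP : ∀ j, IsFeasibleDev 𝓕 Fstar (c j) l u P := by
    intro j
    refine ⟨hbounds, fun F hFm => ?_⟩
    have key := (hfeas j).2 F hFm
    rw [← sub_nonpos, ← Finset.sum_sdiff_sub_sum_sdiff] at key ⊢
    have h1 : ∑ s ∈ Fstar \ F, (c j s - P s) ≤ ∑ s ∈ Fstar \ F, (c j s - p j s) :=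
      Finset.sum_le_sum fun s hs => by
        have := (hcomp j s).1 (Finset.mem_sdiff.mp hs).1; linarith
    have h2 : ∑ s ∈ F \ Fstar, (c j s - p j s) ≤ ∑ s ∈ F \ Fstar, (c j s - P s) :=
      Finset.sum_le_sum fun s hs => by
        have := (hcomp j s).2 (Finset.mem_sdiff.mp hs).2; linarith
    linarith
  have hHP : Hbot w P = δs := by
    obtain ⟨j, -, hj⟩ := Finset.exists_mem_eq_sup' (univ_nonempty (α := J)) δ
    refine le_antisymm (Hbot_le hδs0 fun s hs => ?_) (by rw [hδsdef, hj]; exact (hδ j).2 P (hfeasP j))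
    by_contra hws
    exact hs (by simp only [hPdef, if_neg hws])
  refine ⟨P, hfeasP, hHP, fun q hq => ?_⟩
  obtain ⟨j, -, hj⟩ := Finset.exists_mem_eq_sup' (univ_nonempty (α := J)) δ
  rw [hHP, hδsdef, hj]
  exact (hδ j).2 q (hq j)
end
end

section
/- Suppose c is integer-valued, ℓ takes values in ℤ ∪ {−∞}, and u takes values in ℤ ∪ {+∞}. Then for every δ ≥ 0 the deviation vector p^δ (for the weighted bottleneck Hamming distance setting) is integer-valued; consequently, if a feasible deviation vector exists, the minimum of H_{∞,w} over integer-valued feasible deviation vectors equals the minimum of H_{∞,w} over all feasible deviation vectors. -/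
open Finset

noncomputable section

variable {S : Type*}

section Helpers

variable {S : Type*}

lemma isInt_sum (T : Finset S) (f : S → ℝ) (h : ∀ s ∈ T, ∃ z : ℤ, f s = (z : ℝ)) :
    ∃ z : ℤ, ∑ s ∈ T, f s = (z : ℝ) := by
  classical
  induction T using Finset.cons_induction with
  | empty => exact ⟨0, by simp⟩
  | cons a T ha ih =>
    obtain ⟨z, hz⟩ := h a (Finset.mem_cons_self a T)
    obtain ⟨y, hy⟩ := ih (fun s hs => h s (Finset.mem_cons_of_mem hs))
    exact ⟨z + y, by rw [Finset.sum_cons, hz, hy]; push_cast; ring⟩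

lemma hbot_nonneg [Fintype S] (w q : S → ℝ) (hw : ∀ s, 0 < w s) : 0 ≤ Hbot w q := by
  unfold Hbot
  rcases h : ((((univ : Finset S).filter fun s => q s ≠ 0)).image w).max with _ | a
  · exact le_refl 0
  · obtain ⟨s, _, hs⟩ := Finset.mem_image.1 (Finset.mem_of_max h)
    show (0:ℝ) ≤ a
    exact le_of_lt (hs ▸ hw s)

lemma le_hbot [Fintype S] (w q : S → ℝ) (s : S) (hs : q s ≠ 0) : w s ≤ Hbot w q := by
  have hmem : w s ∈ (((univ : Finset S).filter fun t => q t ≠ 0)).image w :=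
    Finset.mem_image_of_mem _ (Finset.mem_filter.2 ⟨Finset.mem_univ s, hs⟩)
  have hle := Finset.le_max hmem
  unfold Hbot
  rcases h : ((((univ : Finset S).filter fun t => q t ≠ 0)).image w).max with _ | a
  · rw [h] at hle; exact absurd hle (WithBot.not_coe_le_bot _)
  · rw [h] at hle
    show w s ≤ a
    rw [WithBot.some_eq_coe] at hle
    exact WithBot.coe_le_coe.1 hle

lemma hbot_le [Fintype S] (w q : S → ℝ) (δ : ℝ) (hδ : 0 ≤ δ)
    (h : ∀ s, q s ≠ 0 → w s ≤ δ) : Hbot w q ≤ δ := by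
  unfold Hbot
  rcases hm : ((((univ : Finset S).filter fun s => q s ≠ 0)).image w).max with _ | a
  · exact hδ
  · obtain ⟨s, hsmem, hs⟩ := Finset.mem_image.1 (Finset.mem_of_max hm)
    show a ≤ δ
    exact hs ▸ h s (Finset.mem_filter.1 hsmem).2

lemma hbot_mem [Fintype S] (w q : S → ℝ) :
    Hbot w q ∈ insert (0 : ℝ) ((univ : Finset S).image w) := by
  unfold Hbot
  rcases hm : ((((univ : Finset S).filter fun s => q s ≠ 0)).image w).max with _ | a
  · exact Finset.mem_insert_self 0 _
  · obtain ⟨s, _, hs⟩ := Finset.mem_image.1 (Finset.mem_of_max hm)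
    show a ∈ insert (0:ℝ) ((univ : Finset S).image w)
    exact Finset.mem_insert_of_mem (Finset.mem_image.2 ⟨s, Finset.mem_univ s, hs⟩)

lemma mB_isInt [DecidableEq S] (𝓕 : Finset (Finset S)) (Fstar : Finset S)
    (c : S → ℝ) (l u : S → EReal)
    (hl : ∀ s, l s ≠ ⊤) (hu : ∀ s, u s ≠ ⊥) (h𝓕 : 𝓕.Nonempty)
    (hc : ∀ s, ∃ z : ℤ, c s = (z : ℝ))
    (hlint : ∀ s, l s = ⊥ ∨ ∃ z : ℤ, l s = ((z : ℝ) : EReal))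
    (huint : ∀ s, u s = ⊤ ∨ ∃ z : ℤ, u s = ((z : ℝ) : EReal)) :
    ∃ z : ℤ, mB 𝓕 Fstar c l u = (z : ℝ) := by
  have hmax : ∃ z : ℤ, (WithBot.unbotD 0 (𝓕.image fun F =>
      (∑ s ∈ Fstar, c s) - (∑ s ∈ F, c s)
        - ∑ s ∈ (Fstar \ F).filter (fun s => u s < 0), (u s).toReal
        + ∑ s ∈ (F \ Fstar).filter (fun s => 0 < l s), (l s).toReal).max) = (z : ℝ) := by
    rcases hm : (𝓕.image fun F =>
      (∑ s ∈ Fstar, c s) - (∑ s ∈ F, c s)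
        - ∑ s ∈ (Fstar \ F).filter (fun s => u s < 0), (u s).toReal
        + ∑ s ∈ (F \ Fstar).filter (fun s => 0 < l s), (l s).toReal).max with _ | a
    · exact ⟨0, by show (0:ℝ) = _; simp⟩
    · obtain ⟨F, _, hFa⟩ := Finset.mem_image.1 (Finset.mem_of_max hm)
      obtain ⟨z1, hz1⟩ := isInt_sum Fstar c (fun s _ => hc s)
      obtain ⟨z2, hz2⟩ := isInt_sum F c (fun s _ => hc s)
      obtain ⟨z3, hz3⟩ := isInt_sum ((Fstar \ F).filter (fun s => u s < 0))
        (fun s => (u s).toReal) (by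
          intro s hs
          have hlt : u s < 0 := (Finset.mem_filter.1 hs).2
          rcases huint s with h | ⟨z, hz⟩
          · exact absurd (h ▸ hlt) (by simp)
          · exact ⟨z, by simp [hz]⟩)
      obtain ⟨z4, hz4⟩ := isInt_sum ((F \ Fstar).filter (fun s => 0 < l s))
        (fun s => (l s).toReal) (by
          intro s hs
          have hlt : 0 < l s := (Finset.mem_filter.1 hs).2
          rcases hlint s with h | ⟨z, hz⟩
          · exact absurd (h ▸ hlt) (by simp)
          · exact ⟨z, by simp [hz]⟩)
      refine ⟨z1 - z2 - z3 + z4, ?_⟩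
      show a = _
      rw [← hFa, hz1, hz2, hz3, hz4]
      push_cast; ring
  obtain ⟨z, hz⟩ := hmax
  exact ⟨max 0 z, by rw [mB, hz]; push_cast [Int.cast_max]; rfl⟩

end Helpers

theorem bottleneck_integrality [Fintype S] [DecidableEq S]
    (𝓕 : Finset (Finset S)) (Fstar : Finset S) (c w : S → ℝ) (l u : S → EReal)
    (hw : ∀ s, 0 < w s) (hl : ∀ s, l s ≠ ⊤) (hu : ∀ s, u s ≠ ⊥)
    (hlu : ∀ s, l s ≤ u s) (h𝓕 : 𝓕.Nonempty) (hF : Fstar ∈ 𝓕)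
    (hc : ∀ s, ∃ z : ℤ, c s = (z : ℝ))
    (hlint : ∀ s, l s = ⊥ ∨ ∃ z : ℤ, l s = ((z : ℝ) : EReal))
    (huint : ∀ s, u s = ⊤ ∨ ∃ z : ℤ, u s = ((z : ℝ) : EReal)) :
    (∀ δ : ℝ, 0 ≤ δ → ∀ s : S, ∃ z : ℤ, pB 𝓕 Fstar c l u w δ s = (z : ℝ)) ∧
    ((∃ p : S → ℝ, IsFeasibleDev 𝓕 Fstar c l u p) →
      ∃ p : S → ℝ, IsFeasibleDev 𝓕 Fstar c l u p ∧
        (∀ s : S, ∃ z : ℤ, p s = (z : ℝ)) ∧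
        ∀ q : S → ℝ, IsFeasibleDev 𝓕 Fstar c l u q → Hbot w p ≤ Hbot w q) := by
  classical
  have hlcoe : ∀ s, l s ≠ ⊥ → l s = (((l s).toReal : ℝ) : EReal) := by
    intro s h
    rcases hlint s with h' | ⟨z, hz⟩
    · exact absurd h' h
    · rw [hz, EReal.toReal_coe]
  have hucoe : ∀ s, u s ≠ ⊤ → u s = (((u s).toReal : ℝ) : EReal) := by
    intro s h
    rcases huint s with h' | ⟨z, hz⟩
    · exact absurd h' h
    · rw [hz, EReal.toReal_coe]
  constructor
  · intro δ hδ s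
    obtain ⟨zm, hzm⟩ := mB_isInt 𝓕 Fstar c l u hl hu h𝓕 hc hlint huint
    unfold pB
    by_cases hws : w s ≤ δ
    · simp only [hws, if_true]
      by_cases hsF : s ∈ Fstar
      · simp only [hsF, if_true]
        by_cases hus : u s = ⊤
        · simp only [hus, if_true]; exact ⟨zm, hzm⟩
        · simp only [hus, if_false]
          rcases huint s with h' | ⟨z, hz⟩
          · exact absurd h' hus
          · exact ⟨z, by rw [hz, EReal.toReal_coe]⟩
      · simp only [hsF, if_false]
        by_cases hls : l s = ⊥
        · simp only [hls, if_true]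
          exact ⟨-zm, by rw [hzm]; push_cast; ring⟩
        · simp only [hls, if_false]
          rcases hlint s with h' | ⟨z, hz⟩
          · exact absurd h' hls
          · exact ⟨z, by rw [hz, EReal.toReal_coe]⟩
    · simp only [hws, if_false]
      exact ⟨0, by simp⟩
  · rintro ⟨q1, hq1⟩
    set 𝒱 : Finset ℝ := (insert (0:ℝ) ((univ : Finset S).image w)).filter
      (fun t => ∃ q : S → ℝ, IsFeasibleDev 𝓕 Fstar c l u q ∧ Hbot w q = t) with h𝒱
    have h𝒱ne : 𝒱.Nonempty :=
      ⟨Hbot w q1, Finset.mem_filter.2 ⟨hbot_mem w q1, q1, hq1, rfl⟩⟩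
    obtain ⟨-, q0, hq0, hq0δ⟩ := Finset.mem_filter.1 (𝒱.min'_mem h𝒱ne)
    set δ := Hbot w q0 with hδdef
    have hδ0 : 0 ≤ δ := hbot_nonneg w q0 hw
    have hδle : ∀ q, IsFeasibleDev 𝓕 Fstar c l u q → δ ≤ Hbot w q := fun q hq =>
      le_trans (le_of_eq hq0δ)
        (Finset.min'_le _ _ (Finset.mem_filter.2 ⟨hbot_mem w q, q, hq, rfl⟩))
    set B : ℝ := ∑ s : S, (|q0 s| + |(l s).toReal| + |(u s).toReal|) with hB
    have hBle : ∀ t : S, |q0 t| + |(l t).toReal| + |(u t).toReal| ≤ B := fun t =>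
      Finset.single_le_sum (f := fun s => |q0 s| + |(l s).toReal| + |(u s).toReal|)
        (fun s _ => by positivity) (Finset.mem_univ t)
    set M : ℤ := ⌈B⌉ with hM
    have hBM : B ≤ (M:ℝ) := Int.le_ceil B
    have hq0M : ∀ t, |q0 t| ≤ (M:ℝ) := fun t => by
      have h1 := hBle t
      have h2 := abs_nonneg ((l t).toReal)
      have h3 := abs_nonneg ((u t).toReal)
      linarith
    have hlM : ∀ t, |(l t).toReal| ≤ (M:ℝ) := fun t => by
      have h1 := hBle t
      have h2 := abs_nonneg (q0 t)
      have h3 := abs_nonneg ((u t).toReal)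
      linarith
    have huM : ∀ t, |(u t).toReal| ≤ (M:ℝ) := fun t => by
      have h1 := hBle t
      have h2 := abs_nonneg (q0 t)
      have h3 := abs_nonneg ((l t).toReal)
      linarith
    set p : S → ℝ := fun s => if w s ≤ δ then
        (if s ∈ Fstar then (if u s = ⊤ then (M:ℝ) else (u s).toReal)
         else (if l s = ⊥ then -(M:ℝ) else (l s).toReal)) else 0 with hp
    have hq0supp : ∀ s, ¬ w s ≤ δ → q0 s = 0 := by
      intro s h
      by_contra hne
      exact h (le_hbot w q0 s hne)
    have hbounds : ∀ s, l s ≤ ((p s : ℝ) : EReal) ∧ ((p s : ℝ) : EReal) ≤ u s := by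
      intro s
      by_cases hws : w s ≤ δ
      · by_cases hsF : s ∈ Fstar
        · by_cases hus : u s = ⊤
          · have hps : p s = (M:ℝ) := by simp [hp, hws, hsF, hus]
            rw [hps]
            refine ⟨?_, hus ▸ le_top⟩
            rcases hlint s with h' | ⟨z, hz⟩
            · rw [h']; exact bot_le
            · rw [hz]
              refine EReal.coe_le_coe_iff.2 ?_
              have h1 : (l s).toReal = (z:ℝ) := by rw [hz, EReal.toReal_coe]
              have h2 := hlM s
              rw [h1] at h2
              calc (z:ℝ) ≤ |(z:ℝ)| := le_abs_self _
                _ ≤ (M:ℝ) := h2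
          · have hps : p s = (u s).toReal := by simp [hp, hws, hsF, hus]
            rw [hps]
            exact ⟨(hucoe s hus) ▸ hlu s, le_of_eq (hucoe s hus).symm⟩
        · by_cases hls : l s = ⊥
          · have hps : p s = -(M:ℝ) := by simp [hp, hws, hsF, hls]
            rw [hps]
            refine ⟨hls ▸ bot_le, ?_⟩
            rcases huint s with h' | ⟨z, hz⟩
            · rw [h']; exact le_top
            · rw [hz]
              refine EReal.coe_le_coe_iff.2 ?_
              have h1 : (u s).toReal = (z:ℝ) := by rw [hz, EReal.toReal_coe]
              have h2 := huM s
              rw [h1] at h2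
              have h3 : -(z:ℝ) ≤ |(z:ℝ)| := neg_le_abs _
              linarith
          · have hps : p s = (l s).toReal := by simp [hp, hws, hsF, hls]
            rw [hps]
            exact ⟨le_of_eq (hlcoe s hls), (hlcoe s hls) ▸ hlu s⟩
      · have hps : p s = 0 := by simp [hp, hws]
        have hb := hq0.1 s
        rw [hq0supp s hws] at hb
        rw [hps]
        exact hb
    have hpin : ∀ s ∈ Fstar, q0 s ≤ p s := by
      intro s hsF
      by_cases hws : w s ≤ δ
      · by_cases hus : u s = ⊤
        · have hps : p s = (M:ℝ) := by simp [hp, hws, hsF, hus]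
          rw [hps]
          exact le_trans (le_abs_self _) (hq0M s)
        · have hps : p s = (u s).toReal := by simp [hp, hws, hsF, hus]
          rw [hps]
          have hb := (hq0.1 s).2
          rw [hucoe s hus] at hb
          exact EReal.coe_le_coe_iff.1 hb
      · have hps : p s = 0 := by simp [hp, hws]
        rw [hps, hq0supp s hws]
    have hpout : ∀ s, s ∉ Fstar → p s ≤ q0 s := by
      intro s hsF
      by_cases hws : w s ≤ δ
      · by_cases hls : l s = ⊥
        · have hps : p s = -(M:ℝ) := by simp [hp, hws, hsF, hls]
          rw [hps]
          have h1 := hq0M s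
          have h2 : -(q0 s) ≤ |q0 s| := neg_le_abs _
          linarith
        · have hps : p s = (l s).toReal := by simp [hp, hws, hsF, hls]
          rw [hps]
          have hb := (hq0.1 s).1
          rw [hlcoe s hls] at hb
          exact EReal.coe_le_coe_iff.1 hb
      · have hps : p s = 0 := by simp [hp, hws]
        rw [hps, hq0supp s hws]
    have hfeas2 : ∀ F ∈ 𝓕, ∑ s ∈ Fstar, (c s - p s) ≤ ∑ s ∈ F, (c s - p s) := by
      intro F hFmem
      have hq0F := hq0.2 F hFmem
      have e1 := Finset.sum_sdiff_sub_sum_sdiff (s₁ := F) (s₂ := Fstar)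
        (f := fun s => c s - q0 s)
      have e2 := Finset.sum_sdiff_sub_sum_sdiff (s₁ := F) (s₂ := Fstar)
        (f := fun s => c s - p s)
      have c1 : ∑ s ∈ Fstar \ F, (c s - p s) ≤ ∑ s ∈ Fstar \ F, (c s - q0 s) :=
        Finset.sum_le_sum (fun s hs => by
          have := hpin s (Finset.mem_sdiff.1 hs).1; linarith)
      have c2 : ∑ s ∈ F \ Fstar, (c s - q0 s) ≤ ∑ s ∈ F \ Fstar, (c s - p s) :=
        Finset.sum_le_sum (fun s hs => by
          have := hpout s (Finset.mem_sdiff.1 hs).2; linarith)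
      linarith
    have hpsupp : ∀ s, p s ≠ 0 → w s ≤ δ := by
      intro s h
      by_contra hws
      exact h (by simp [hp, hws])
    refine ⟨p, ⟨hbounds, hfeas2⟩, ?_, ?_⟩
    · intro s
      by_cases hws : w s ≤ δ
      · by_cases hsF : s ∈ Fstar
        · by_cases hus : u s = ⊤
          · exact ⟨M, by simp [hp, hws, hsF, hus]⟩
          · rcases huint s with h' | ⟨z, hz⟩
            · exact absurd h' hus
            · exact ⟨z, by simp [hp, hws, hsF, hus, hz]⟩
        · by_cases hls : l s = ⊥
          · exact ⟨-M, by simp [hp, hws, hsF, hls]⟩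
          · rcases hlint s with h' | ⟨z, hz⟩
            · exact absurd h' hls
            · exact ⟨z, by simp [hp, hws, hsF, hls, hz]⟩
      · exact ⟨0, by simp [hp, hws]⟩
    · intro q hq
      exact le_trans (hbot_le w p δ hδ0 hpsupp) (hδle q hq)
end
end

section
/- Let d := max{ 0, max{ (c^j(F*) − c^j(F)) / ( (1/w)(F* △ F) ) : j ∈ [k], F ∈ 𝓕, F ≠ F* } } (inner maximum over an empty index set taken to be −∞), and define p^d : S → ℝ by p^d(s) = d/w(s) for s ∈ F* and p^d(s) = −d/w(s) for s ∈ S\F*. Then p^d is a feasible deviation vector for the unconstrained multi-cost problem, i.e., (c^j − p^d)(F*) ≤ (c^j − p^d)(F) for every j ∈ [k] and every F ∈ 𝓕. -/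
open Finset

noncomputable section

variable {S : Type*}

/-- The weighted ℓ∞-norm `‖p‖_{∞,w} = max_{s ∈ S} w(s)·|p(s)|`. -/
def normI [Fintype S] [Nonempty S] (w p : S → ℝ) : ℝ :=
  (univ : Finset S).sup' univ_nonempty fun s => w s * |p s|

/-- The special deviation vector `p^δ` of the weighted ℓ∞-norm setting:
`δ/w(s)` clamped to `[ℓ(s), u(s)]` on `F*`, and `-δ/w(s)` clamped to
`[ℓ(s), u(s)]` outside of `F*`. -/
def pI [DecidableEq S] (Fstar : Finset S) (l u : S → EReal) (w : S → ℝ) (δ : ℝ) (s : S) : ℝ :=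
  if s ∈ Fstar then
    if ((δ / w s : ℝ) : EReal) < l s then (l s).toReal
    else if u s < ((δ / w s : ℝ) : EReal) then (u s).toReal
    else δ / w s
  else
    if ((-(δ / w s) : ℝ) : EReal) < l s then (l s).toReal
    else if u s < ((-(δ / w s) : ℝ) : EReal) then (u s).toReal
    else -(δ / w s)

/-- The min-max bound: `max{0, max{(cʲ(F*) − cʲ(F)) / (1/w)(F* △ F) : j, F ∈ 𝓕, F ≠ F*}}`. -/
def minmaxBound [DecidableEq S] {J : Type*} [Fintype J]
    (𝓕 : Finset (Finset S)) (Fstar : Finset S) (c : J → S → ℝ) (w : S → ℝ) : ℝ :=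
  max 0 ((((univ : Finset J) ×ˢ (𝓕.erase Fstar)).image fun jF =>
    ((∑ s ∈ Fstar, c jF.1 s) - (∑ s ∈ jF.2, c jF.1 s)) /
      (∑ s ∈ (Fstar \ jF.2) ∪ (jF.2 \ Fstar), (w s)⁻¹)).max.unbotD 0)

theorem linf_unconstrained_pd_feasible [Fintype S] [DecidableEq S]
    {J : Type*} [Fintype J] [Nonempty J]
    (𝓕 : Finset (Finset S)) (Fstar : Finset S) (c : J → S → ℝ) (w : S → ℝ)
    (hw : ∀ s, 0 < w s) (h𝓕 : 𝓕.Nonempty) (hF : Fstar ∈ 𝓕) :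
    ∀ j, ∀ F ∈ 𝓕,
      (∑ s ∈ Fstar, (c j s -
        (if s ∈ Fstar then minmaxBound 𝓕 Fstar c w / w s
          else -(minmaxBound 𝓕 Fstar c w / w s)))) ≤
      (∑ s ∈ F, (c j s -
        (if s ∈ Fstar then minmaxBound 𝓕 Fstar c w / w s
          else -(minmaxBound 𝓕 Fstar c w / w s)))) := by
  intro j F hFmem
  set d : ℝ := minmaxBound 𝓕 Fstar c w with hd
  have hd0 : 0 ≤ d := le_max_left _ _
  set p : S → ℝ := fun s => if s ∈ Fstar then d / w s else -(d / w s) with hp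
  rcases eq_or_ne F Fstar with rfl | hne
  · exact le_rfl
  · show ∑ s ∈ Fstar, (c j s - p s) ≤ ∑ s ∈ F, (c j s - p s)
    -- the key inequality
    set D : ℝ := ∑ s ∈ (Fstar \ F) ∪ (F \ Fstar), (w s)⁻¹ with hD
    have hsd : ((Fstar \ F) ∪ (F \ Fstar)).Nonempty := by
      rw [Finset.nonempty_iff_ne_empty]
      intro h
      rw [Finset.union_eq_empty, Finset.sdiff_eq_empty_iff_subset,
        Finset.sdiff_eq_empty_iff_subset] at h
      exact hne (Finset.Subset.antisymm h.2 h.1)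
    have hDpos : 0 < D := Finset.sum_pos (fun s _ => inv_pos.2 (hw s)) hsd
    have hmem : (((∑ s ∈ Fstar, c j s) - (∑ s ∈ F, c j s)) / D) ∈
        (((univ : Finset J) ×ˢ (𝓕.erase Fstar)).image fun jF =>
          ((∑ s ∈ Fstar, c jF.1 s) - (∑ s ∈ jF.2, c jF.1 s)) /
            (∑ s ∈ (Fstar \ jF.2) ∪ (jF.2 \ Fstar), (w s)⁻¹)) := by
      refine Finset.mem_image.2 ⟨(j, F), ?_, rfl⟩
      exact Finset.mem_product.2 ⟨Finset.mem_univ _, Finset.mem_erase.2 ⟨hne, hFmem⟩⟩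
    have hvd : ((∑ s ∈ Fstar, c j s) - (∑ s ∈ F, c j s)) / D ≤ d := by
      set T := (((univ : Finset J) ×ˢ (𝓕.erase Fstar)).image fun jF =>
          ((∑ s ∈ Fstar, c jF.1 s) - (∑ s ∈ jF.2, c jF.1 s)) /
            (∑ s ∈ (Fstar \ jF.2) ∪ (jF.2 \ Fstar), (w s)⁻¹)) with hT
      have hTne : T.Nonempty := ⟨_, hmem⟩
      have h1 : ((∑ s ∈ Fstar, c j s) - (∑ s ∈ F, c j s)) / D ≤ T.max' hTne :=
        Finset.le_max' _ _ hmem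
      have h2 : T.max.unbotD 0 = T.max' hTne := by
        rw [← Finset.coe_max' hTne]; rfl
      calc ((∑ s ∈ Fstar, c j s) - (∑ s ∈ F, c j s)) / D ≤ T.max' hTne := h1
        _ = T.max.unbotD 0 := h2.symm
        _ ≤ d := le_max_right _ _
    have hkey : (∑ s ∈ Fstar, c j s) - (∑ s ∈ F, c j s) ≤ d * D :=
      (div_le_iff₀ hDpos).1 hvd |>.trans_eq (by ring)
    -- compute the deviation sums
    have hpF : ∑ s ∈ Fstar, p s - ∑ s ∈ F, p s = d * D := by
      have e1 : ∑ s ∈ Fstar, p s = ∑ s ∈ Fstar ∩ F, p s + ∑ s ∈ Fstar \ F, p s :=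
        (Finset.sum_inter_add_sum_sdiff Fstar F p).symm
      have e2 : ∑ s ∈ F, p s = ∑ s ∈ F ∩ Fstar, p s + ∑ s ∈ F \ Fstar, p s :=
        (Finset.sum_inter_add_sum_sdiff F Fstar p).symm
      have e3 : Fstar ∩ F = F ∩ Fstar := Finset.inter_comm _ _
      have e4 : ∑ s ∈ Fstar \ F, p s = d * ∑ s ∈ Fstar \ F, (w s)⁻¹ := by
        rw [Finset.mul_sum]
        refine Finset.sum_congr rfl fun s hs => ?_
        have : s ∈ Fstar := (Finset.mem_sdiff.1 hs).1
        simp [hp, this, div_eq_mul_inv]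
      have e5 : ∑ s ∈ F \ Fstar, p s = -(d * ∑ s ∈ F \ Fstar, (w s)⁻¹) := by
        rw [Finset.mul_sum, ← Finset.sum_neg_distrib]
        refine Finset.sum_congr rfl fun s hs => ?_
        have : s ∉ Fstar := (Finset.mem_sdiff.1 hs).2
        simp [hp, this, div_eq_mul_inv]
      have e6 : D = ∑ s ∈ Fstar \ F, (w s)⁻¹ + ∑ s ∈ F \ Fstar, (w s)⁻¹ := by
        rw [hD, Finset.sum_union (disjoint_sdiff_sdiff)]
      rw [e1, e2, e3, e4, e5, e6]; ring
    rw [Finset.sum_sub_distrib, Finset.sum_sub_distrib]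
    have := hkey.trans_eq hpF.symm
    linarith
end
end
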